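/- Let X = {0,1}, d ∉ X, D = {u·d·v : u,v ∈ X*, |v| = 2|u| or |v| = 2|u|+1}, and let g be the substitution g(a) = a·D for a ∈ X. Then for every closed set F ⊆ X^ω, the image g(F) ⊆ (X∪{d})^ω is the intersection of a closed set with the Π⁰₂ set ({0,1}*·d)^ω, hence g(F) is a Π⁰₂ (in particular Borel) subset of (X∪{d})^ω. -/

import Mathlib

open Set

/-- Finite levels of the Borel hierarchy: index `n` corresponds to level `n+1`.
Index 0 gives (open, closed); index `n+1` gives (countable unions of level-`n` Π sets,
countable intersections of level-`n` Σ sets). -/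
def sigmaPiAux (α : Type*) [TopologicalSpace α] : ℕ → (Set α → Prop) × (Set α → Prop)
  | 0 => (fun s => IsOpen s, fun s => IsClosed s)
  | n + 1 =>
      (fun s => ∃ f : ℕ → Set α, (∀ i, (sigmaPiAux α n).2 (f i)) ∧ s = ⋃ i, f i,
       fun s => ∃ f : ℕ → Set α, (∀ i, (sigmaPiAux α n).1 (f i)) ∧ s = ⋂ i, f i)

/-- The class Σ⁰ₖ of the Borel hierarchy (for `k ≥ 1`). -/
def SigmaClass {α : Type*} [TopologicalSpace α] (k : ℕ) (s : Set α) : Prop :=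
  (sigmaPiAux α (k - 1)).1 s

/-- The class Π⁰ₖ of the Borel hierarchy (for `k ≥ 1`). -/
def PiClass {α : Type*} [TopologicalSpace α] (k : ℕ) (s : Set α) : Prop :=
  (sigmaPiAux α (k - 1)).2 s

/-- A finite word `l` is a prefix of the infinite word `x`. -/
def PrefixOf {α : Type*} (l : List α) (x : ℕ → α) : Prop :=
  ∀ (i : ℕ) (h : i < l.length), l.get ⟨i, h⟩ = x i

/-- The ω-power of a dictionary `V`: infinite concatenations of nonempty words of `V`. -/
def omegaPow {α : Type*} (V : Set (List α)) : Set (ℕ → α) :=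
  {x | ∃ u : ℕ → List α, (∀ i, u i ∈ V ∧ u i ≠ []) ∧
        ∀ n, PrefixOf (((List.range n).map u).flatten) x}

/-- Words over `X ∪ {b}` (with `b = none`) containing infinitely many letters of `X`. -/
def Zinf (X : Type*) : Set (ℕ → Option X) := {x | ∀ N, ∃ m, N ≤ m ∧ (x m).isSome}

/-- The map deleting every occurrence of the letter `b = none`. -/
noncomputable def phi {X : Type*} [Inhabited X] (x : ℕ → Option X) : ℕ → X :=
  fun n => (x (Nat.nth (fun m => (x m).isSome = true) n)).getD default

/-- `A^b = {x ∈ (X ∪ {b})^ω : x(/b) ∈ A}`. -/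
def bPower {X : Type*} [Inhabited X] (A : Set (ℕ → X)) : Set (ℕ → Option X) :=
  {x | x ∈ Zinf X ∧ phi x ∈ A}

/-- Wadge reducibility. -/
def WadgeLE {α β : Type*} [TopologicalSpace α] [TopologicalSpace β]
    (L : Set α) (L' : Set β) : Prop :=
  ∃ f : α → β, Continuous f ∧ L = f ⁻¹' L'

/-- Substitution extended to finite words. -/
def subWord {X Y : Type*} (f : X → Set (List Y)) : List X → Set (List Y)
  | [] => {[]}
  | a :: w => {l | ∃ u v, u ∈ f a ∧ v ∈ subWord f w ∧ l = u ++ v}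

/-- Substitution extended to dictionaries. -/
def subLang {X Y : Type*} (f : X → Set (List Y)) (V : Set (List X)) : Set (List Y) :=
  ⋃ w ∈ V, subWord f w

/-- Substitution extended to an infinite word. -/
def subOmega {X Y : Type*} (f : X → Set (List Y)) (x : ℕ → X) : Set (ℕ → Y) :=
  {y | ∃ u : ℕ → List Y, (∀ i, u i ∈ f (x i)) ∧
        ∀ n, PrefixOf (((List.range n).map u).flatten) y}

/-- Substitution extended to ω-languages. -/
def subOmegaImage {X Y : Type*} (f : X → Set (List Y)) (L : Set (ℕ → X)) : Set (ℕ → Y) :=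
  ⋃ x ∈ L, subOmega f x


/-- `D = {u·d·v : u,v ∈ {0,1}*, |v| = 2|u| or |v| = 2|u|+1}`, with `d = none`. -/
def Ddict : Set (List (Option Bool)) :=
  {l | ∃ u v : List Bool, (v.length = 2 * u.length ∨ v.length = 2 * u.length + 1) ∧
        l = u.map some ++ [none] ++ v.map some}

/-- The substitution `g(a) = a·D`. -/
def gsub : Bool → Set (List (Option Bool)) := fun a => {l | ∃ w ∈ Ddict, l = some a :: w}

/-- `({0,1}*·d)^ω`: the words over `{0,1,d}` with infinitely many occurrences of `d`. -/
def Dinf : Set (ℕ → Option Bool) := {x | ∀ N, ∃ m, N ≤ m ∧ x m = none}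

/-- A valid block of `x` on `[s, e)` with letter `a`. -/
def Block (x : ℕ → Option Bool) (s e : ℕ) (a : Bool) : Prop :=
  x s = some a ∧ ∃ p, s < p ∧ p < e ∧ x p = none ∧
    (∀ j, s < j → j < e → j ≠ p → x j ≠ none) ∧
    (e - p - 1 = 2 * (p - s - 1) ∨ e - p - 1 = 2 * (p - s - 1) + 1)

def FullParse (x : ℕ → Option Bool) (z : ℕ → Bool) (s : ℕ → ℕ) : Prop :=
  s 0 = 0 ∧ ∀ i, Block x (s i) (s (i + 1)) (z i)

lemma some_getD {o : Option Bool} (h : o ≠ none) : some (o.getD false) = o := by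
  cases o with
  | none => exact absurd rfl h
  | some b => rfl

lemma block_of_list {x : ℕ → Option Bool} {s : ℕ} {a : Bool} {b : List (Option Bool)}
    (hb : b ∈ gsub a)
    (hm : ∀ k, ∀ _ : k < b.length, b[k] = x (s + k)) :
    Block x s (s + b.length) a := by
  obtain ⟨w, hw, rfl⟩ := hb
  obtain ⟨U, V, hlen, rfl⟩ := hw
  have hblen : (some a :: (U.map some ++ [none] ++ V.map some)).length
      = U.length + V.length + 2 := by simp; omega
  constructor
  · have := hm 0 (by omega)
    simpa using this.symm
  · refine ⟨s + U.length + 1, by omega, by omega, ?_, ?_, ?_⟩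
    · have hk : U.length + 1 < (some a :: (U.map some ++ [none] ++ V.map some)).length := by
        omega
      have := hm (U.length + 1) hk
      rw [show s + U.length + 1 = s + (U.length + 1) by omega, ← this]
      simp [List.getElem_cons, List.getElem_append]
    · intro j hj1 hj2 hj3
      have hk : j - s < (some a :: (U.map some ++ [none] ++ V.map some)).length := by
        omega
      have := hm (j - s) hk
      rw [show j = s + (j - s) by omega, ← this]
      rcases lt_or_gt_of_ne (show j - s ≠ U.length + 1 by omega) with h | h
      · have h1 : j - s - 1 < U.length := by omega
        simp [List.getElem_cons, List.getElem_append, show j - s ≠ 0 by omega, h1]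
      · have h1 : ¬ (j - s - 1 < U.length) := by omega
        have h2 : ¬ (j - s - 1 < U.length + 1) := by omega
        simp [List.getElem_cons, List.getElem_append, show j - s ≠ 0 by omega, h1, h2]
        omega
    · rw [hblen]
      rcases hlen with h | h
      · left; omega
      · right; omega

lemma list_of_block {x : ℕ → Option Bool} {s e : ℕ} {a : Bool}
    (h : Block x s e a) :
    List.ofFn (fun k : Fin (e - s) => x (s + k)) ∈ gsub a := by
  obtain ⟨hs, p, hp1, hp2, hpn, hup, hlen⟩ := h
  set U : List Bool := List.ofFn (fun k : Fin (p - s - 1) => (x (s + 1 + k)).getD false) with hU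
  set V : List Bool := List.ofFn (fun k : Fin (e - p - 1) => (x (p + 1 + k)).getD false) with hV
  refine ⟨U.map some ++ [none] ++ V.map some, ⟨U, V, ?_, rfl⟩, ?_⟩
  · simpa [hU, hV] using hlen
  · apply List.ext_getElem
    · simp [hU, hV]; omega
    · intro k hk1 hk2
      simp only [List.getElem_ofFn]
      have hUlen : U.length = p - s - 1 := by simp [hU]
      have hVlen : V.length = e - p - 1 := by simp [hV]
      rcases Nat.eq_zero_or_pos k with rfl | hk0
      · simpa using hs
      rcases lt_trichotomy k (p - s) with h1 | h1 | h1
      · have h2 : k - 1 < U.length := by omega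
        have : (some a :: (U.map some ++ [none] ++ V.map some))[k]
            = some (U[k-1]'h2) := by
          simp [List.getElem_cons, List.getElem_append, show k ≠ 0 by omega, h2]
        rw [this]
        simp only [hU, List.getElem_ofFn]
        rw [show s + 1 + (k - 1) = s + k by omega]
        exact (some_getD (hup (s + k) (by omega) (by simp only [List.length_ofFn] at hk1; omega) (by omega))).symm
      · have h2 : ¬ (k - 1 < U.length) := by omega
        have h3 : k - 1 - U.length = 0 := by omega
        have : (some a :: (U.map some ++ [none] ++ V.map some))[k] = none := by
          simp [List.getElem_cons, List.getElem_append, show k ≠ 0 by omega, h2, h3]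
        rw [this, show s + k = p by omega, hpn]
      · have h2 : ¬ (k - 1 < U.length) := by omega
        have h3 : ¬ (k - 1 - U.length = 0) := by omega
        have h4 : k - 1 - U.length - 1 < V.length := by
          simp only [List.length_ofFn] at hk1; omega
        have : (some a :: (U.map some ++ [none] ++ V.map some))[k]
            = some (V[k - 1 - U.length - 1]'h4) := by
          simp [List.getElem_cons, List.getElem_append, show k ≠ 0 by omega, h2, h3]
        rw [this]
        simp only [hV, List.getElem_ofFn]
        rw [show p + 1 + (k - 1 - U.length - 1) = s + k by omega]
        refine (some_getD (hup (s + k) (by omega) ?_ (by omega))).symm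
        simp only [List.length_ofFn] at hk1; omega

lemma parse_lt {x z s} (h : FullParse x z s) (i : ℕ) : s i < s (i + 1) := by
  obtain ⟨_, p, h1, h2, _⟩ := h.2 i
  omega

lemma range_succ_flatten {α : Type*} (u : ℕ → List α) (n : ℕ) :
    ((List.range (n+1)).map u).flatten = ((List.range n).map u).flatten ++ u n := by
  simp [List.range_succ]

lemma parse_of_mem {y : ℕ → Option Bool} {z : ℕ → Bool}
    (h : y ∈ subOmega gsub z) : ∃ s, FullParse y z s := by
  obtain ⟨u, hu, hpre⟩ := h
  refine ⟨fun i => (((List.range i).map u).flatten).length, by simp, fun i => ?_⟩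
  set L : List (Option Bool) := ((List.range i).map u).flatten with hL
  have e : ((List.range (i+1)).map u).flatten = L ++ u i := range_succ_flatten u i
  have hlen : (((List.range (i+1)).map u).flatten).length = L.length + (u i).length := by
    rw [e, List.length_append]
  have : Block y L.length (L.length + (u i).length) (z i) := by
    refine block_of_list (hu i) ?_
    intro k hk
    have hb : k + L.length < (((List.range (i+1)).map u).flatten).length := by omega
    have h1 := hpre (i + 1) (k + L.length) hb
    rw [List.get_eq_getElem] at h1
    calc (u i)[k] = (L ++ u i)[k + L.length]'(by simp; omega) :=
          List.getElem_append_right' L hk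
      _ = (((List.range (i+1)).map u).flatten)[k + L.length]'hb := (List.getElem_of_eq e hb).symm
      _ = y (k + L.length) := h1
      _ = y (L.length + k) := by rw [Nat.add_comm]
  show Block y L.length (((List.range (i+1)).map u).flatten).length (z i)
  rw [hlen]
  exact this

lemma mem_of_parse {y : ℕ → Option Bool} {z : ℕ → Bool} {s : ℕ → ℕ}
    (h : FullParse y z s) : y ∈ subOmega gsub z := by
  set u : ℕ → List (Option Bool) :=
    fun i => List.ofFn (fun k : Fin (s (i+1) - s i) => y (s i + k)) with hu
  have hulen : ∀ i, (u i).length = s (i+1) - s i := by intro i; simp [hu]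
  have hflen : ∀ n, (((List.range n).map u).flatten).length = s n := by
    intro n
    induction n with
    | zero => simpa using h.1.symm
    | succ n ih =>
      rw [range_succ_flatten, List.length_append, ih, hulen]
      have := parse_lt h n
      omega
  have hfget : ∀ n k (hk : k < (((List.range n).map u).flatten).length),
      (((List.range n).map u).flatten)[k] = y k := by
    intro n
    induction n with
    | zero => intro k hk; simp at hk
    | succ n ih =>
      intro k hk
      have e : ((List.range (n+1)).map u).flatten = ((List.range n).map u).flatten ++ u n :=
        range_succ_flatten u n
      rw [List.getElem_of_eq e hk]
      have hug : ∀ i m (hm : m < (u i).length), (u i)[m] = y (s i + m) := by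
        intro i m hm
        simp only [hu, List.getElem_ofFn]
      rcases lt_or_ge k ((((List.range n).map u).flatten).length) with hlt | hle
      · rw [List.getElem_append_left hlt]
        exact ih k hlt
      · have hm : k - (((List.range n).map u).flatten).length < (u n).length := by
          have h1 := hflen n
          have h2 := hflen (n + 1)
          rw [hulen]
          rw [h2] at hk
          omega
        rw [List.getElem_append_right hle, hug n _ hm]
        have h1 := hflen n
        congr 1
        omega
  exact ⟨u, fun i => list_of_block (h.2 i), fun n i hi => by
    rw [List.get_eq_getElem]; exact hfget n i hi⟩

lemma parse_ge {x : ℕ → Option Bool} {z : ℕ → Bool} {s : ℕ → ℕ}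
    (h : FullParse x z s) (n : ℕ) : n ≤ s n := by
  induction n with
  | zero => omega
  | succ n ih => have := parse_lt h n; omega

lemma parse_dinf {x : ℕ → Option Bool} {z : ℕ → Bool} {s : ℕ → ℕ}
    (h : FullParse x z s) : x ∈ Dinf := by
  intro N
  obtain ⟨_, p, hp1, hp2, hpn, _, _⟩ := h.2 N
  exact ⟨p, by have := parse_ge h N; omega, hpn⟩

lemma block_congr {x y : ℕ → Option Bool} {s e n : ℕ} {a : Bool}
    (hagree : ∀ j < n, y j = x j) (hen : e ≤ n) (h : Block y s e a) : Block x s e a := by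
  obtain ⟨hs, p, hp1, hp2, hpn, hup, hlen⟩ := h
  refine ⟨by rw [← hagree s (by omega)]; exact hs, p, hp1, hp2,
    by rw [← hagree p (by omega)]; exact hpn, fun j hj1 hj2 hj3 => ?_, hlen⟩
  rw [← hagree j (by omega)]
  exact hup j hj1 hj2 hj3

lemma parse_bound {x y : ℕ → Option Bool} {z : ℕ → Bool} {σ : ℕ → ℕ} {d : ℕ → ℕ} {n : ℕ}
    (hagree : ∀ j < n, y j = x j) (hσ : FullParse y z σ)
    (hdnone : ∀ i, x (d i) = none) (hdmono : StrictMono d) :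
    ∀ i, d i < n → σ i ≤ d i := by
  intro i
  induction i with
  | zero => intro _; rw [hσ.1]; omega
  | succ i ih =>
    intro hn
    have hdi : d i < n := lt_trans (hdmono (Nat.lt_succ_self i)) hn
    have hσi : σ i ≤ d i := ih hdi
    by_contra hgt
    push_neg at hgt
    obtain ⟨hs, p, hp1, hp2, hpn, hup, _⟩ := hσ.2 i
    have hdd : d i < d (i + 1) := hdmono (Nat.lt_succ_self i)
    have hyi : y (d i) = none := by rw [hagree _ hdi]; exact hdnone i
    have hyi1 : y (d (i + 1)) = none := by rw [hagree _ hn]; exact hdnone (i + 1)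
    rcases eq_or_lt_of_le hσi with he | hlt
    · rw [← he] at hyi; rw [hs] at hyi; cases hyi
    · rcases eq_or_ne (d i) p with hep | hnep
      · exact hup (d (i + 1)) (by omega) (by omega) (by omega) hyi1
      · exact hup (d i) hlt (by omega) hnep hyi

section Topo
variable [TopologicalSpace (Option Bool)] [DiscreteTopology (Option Bool)]

lemma cylinder_open (c : ℕ → Option Bool) (n : ℕ) :
    IsOpen {y : ℕ → Option Bool | ∀ i < n, y i = c i} := by
  have : {y : ℕ → Option Bool | ∀ i < n, y i = c i}
      = ⋂ i : Fin n, (fun y : ℕ → Option Bool => y i) ⁻¹' {c i} := by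
    ext y
    simp only [mem_setOf_eq, mem_iInter, mem_preimage, mem_singleton_iff]
    exact ⟨fun h i => h i i.2, fun h i hi => h ⟨i, hi⟩⟩
  rw [this]
  exact isOpen_iInter_of_finite fun i =>
    (isOpen_discrete _).preimage (continuous_apply (i : ℕ))

lemma closure_approx {G : Set (ℕ → Option Bool)} {x : ℕ → Option Bool}
    (hx : x ∈ closure G) (n : ℕ) : ∃ y ∈ G, ∀ i < n, y i = x i := by
  rw [mem_closure_iff] at hx
  obtain ⟨y, hy1, hy2⟩ := hx _ (cylinder_open x n) (fun i _ => rfl)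
  exact ⟨y, hy2, hy1⟩

lemma closed_gdelta {C : Set (ℕ → Option Bool)} (hC : IsClosed C) :
    ∃ f : ℕ → Set (ℕ → Option Bool), (∀ n, IsOpen (f n)) ∧ C = ⋂ n, f n := by
  refine ⟨fun n => ⋃ c ∈ C, {y | ∀ i < n, y i = c i}, fun n => ?_, ?_⟩
  · exact isOpen_biUnion fun c _ => cylinder_open c n
  · apply Subset.antisymm
    · intro y hy
      exact mem_iInter.mpr fun n => mem_biUnion hy fun i _ => rfl
    · intro y hy
      have : y ∈ closure C := by
        rw [mem_closure_iff]
        intro o ho hyo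
        obtain ⟨I, u, hIu, hsub⟩ := isOpen_pi_iff.mp ho y hyo
        have hy' := mem_iInter.mp hy (I.sup id + 1)
        obtain ⟨c, hcC, hcy⟩ := mem_iUnion₂.mp hy'
        refine ⟨c, hsub ?_, hcC⟩
        intro i hi
        have : i ≤ I.sup id := Finset.le_sup (f := id) hi
        rw [← hcy i (by omega)]
        exact (hIu i hi).2
      rwa [hC.closure_eq] at this

end Topo

lemma G_subset_Dinf {F : Set (ℕ → Bool)} : subOmegaImage gsub F ⊆ Dinf := by
  intro y hy
  obtain ⟨z, hzF, hyz⟩ := mem_iUnion₂.mp hy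
  obtain ⟨s, hs⟩ := parse_of_mem hyz
  exact parse_dinf hs

lemma hard_dir [TopologicalSpace (Option Bool)] [DiscreteTopology (Option Bool)]
    {F : Set (ℕ → Bool)} (hF : IsClosed F) {x : ℕ → Option Bool}
    (hxc : x ∈ closure (subOmegaImage gsub F)) (hxd : x ∈ Dinf) :
    x ∈ subOmegaImage gsub F := by
  classical
  have hinf : {m | x m = none}.Infinite := by
    apply Set.infinite_of_not_bddAbove
    rintro ⟨N, hN⟩
    obtain ⟨m, hm1, hm2⟩ := hxd (N + 1)
    have := hN (show m ∈ {m | x m = none} from hm2)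
    omega
  set d : ℕ → ℕ := fun i => Nat.nth (fun m => x m = none) i with hd
  have hdnone : ∀ i, x (d i) = none := fun i => Nat.nth_mem_of_infinite hinf i
  have hdmono : StrictMono d := Nat.nth_strictMono hinf
  set B : ℕ → Set ((ℕ → Bool) × Π i : ℕ, Fin (d i + 1)) := fun k =>
    {p | p.1 ∈ F ∧ ((p.2 0 : ℕ) = 0 ∧ ∀ i < k, Block x (p.2 i) (p.2 (i+1)) (p.1 i))} with hB
  have hBclosed : ∀ k, IsClosed (B k) := by
    intro k
    have h1 : IsClosed ((fun p : (ℕ → Bool) × Π i : ℕ, Fin (d i + 1) => p.1) ⁻¹' F) :=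
      hF.preimage continuous_fst
    have h2 : IsClosed {p : (ℕ → Bool) × Π i : ℕ, Fin (d i + 1) | (p.2 0 : ℕ) = 0} := by
      have : {p : (ℕ → Bool) × Π i : ℕ, Fin (d i + 1) | (p.2 0 : ℕ) = 0}
          = (fun p : (ℕ → Bool) × Π i : ℕ, Fin (d i + 1) => p.2 0) ⁻¹'
            {j : Fin (d 0 + 1) | (j : ℕ) = 0} := rfl
      rw [this]
      exact (isClosed_discrete _).preimage ((continuous_apply 0).comp continuous_snd)
    have h3 : ∀ i : ℕ,
        IsClosed {p : (ℕ → Bool) × Π i : ℕ, Fin (d i + 1) |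
          i < k → Block x (p.2 i) (p.2 (i+1)) (p.1 i)} := by
      intro i
      by_cases hik : i < k
      · have : {p : (ℕ → Bool) × Π i : ℕ, Fin (d i + 1) |
            i < k → Block x (p.2 i) (p.2 (i+1)) (p.1 i)}
            = (fun p : (ℕ → Bool) × Π i : ℕ, Fin (d i + 1) => (p.1 i, p.2 i, p.2 (i+1))) ⁻¹'
              {q : Bool × Fin (d i + 1) × Fin (d (i+1) + 1) | Block x q.2.1 q.2.2 q.1} := by
          ext p
          simp [hik]
        rw [this]
        refine (isClosed_discrete _).preimage ?_
        exact ((continuous_apply i).comp continuous_fst).prodMk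
          (((continuous_apply i).comp continuous_snd).prodMk
            ((continuous_apply (i+1)).comp continuous_snd))
      · have : {p : (ℕ → Bool) × Π i : ℕ, Fin (d i + 1) |
            i < k → Block x (p.2 i) (p.2 (i+1)) (p.1 i)} = univ :=
          eq_univ_of_forall fun p h => absurd h hik
        rw [this]
        exact isClosed_univ
    have heq : B k = ((fun p : (ℕ → Bool) × Π i : ℕ, Fin (d i + 1) => p.1) ⁻¹' F) ∩
        ({p : (ℕ → Bool) × Π i : ℕ, Fin (d i + 1) | (p.2 0 : ℕ) = 0} ∩
          ⋂ i : ℕ, {p : (ℕ → Bool) × Π i : ℕ, Fin (d i + 1) |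
            i < k → Block x (p.2 i) (p.2 (i+1)) (p.1 i)}) := by
      ext p
      simp only [hB, mem_setOf_eq, mem_inter_iff, mem_preimage, mem_iInter]
    rw [heq]
    exact h1.inter (h2.inter (isClosed_iInter h3))
  have hBmono : ∀ k, B (k + 1) ⊆ B k := by
    intro k p hp
    exact ⟨hp.1, hp.2.1, fun i hi => hp.2.2 i (by omega)⟩
  have hBne : ∀ k, (B k).Nonempty := by
    intro k
    obtain ⟨y, hyG, hyx⟩ := closure_approx hxc (d k + 1)
    obtain ⟨z, hzF, hyz⟩ := mem_iUnion₂.mp hyG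
    obtain ⟨σ, hσ⟩ := parse_of_mem hyz
    have hbound : ∀ i, i ≤ k → σ i ≤ d i := by
      intro i hik
      exact parse_bound hyx hσ hdnone hdmono i
        (by have := hdmono.monotone hik; omega)
    refine ⟨⟨z, fun i => if h : i ≤ k then ⟨σ i, by have := hbound i h; omega⟩
      else ⟨0, by omega⟩⟩, hzF, ?_, ?_⟩
    · simp only [dif_pos (Nat.zero_le k)]
      exact hσ.1
    · intro i hi
      simp only [dif_pos (show i ≤ k by omega), dif_pos (show i + 1 ≤ k by omega)]
      refine block_congr hyx ?_ (hσ.2 i)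
      have h1 : σ (i + 1) ≤ d (i + 1) := hbound (i + 1) (by omega)
      have h2 : d (i + 1) ≤ d k := hdmono.monotone (by omega)
      omega
  obtain ⟨⟨z, s⟩, hzs⟩ := IsCompact.nonempty_iInter_of_sequence_nonempty_isCompact_isClosed
    B hBmono hBne ((hBclosed 0).isCompact) hBclosed
  have hmem : ∀ k, (z, s) ∈ B k := fun k => mem_iInter.mp hzs k
  have hpar : FullParse x z (fun i => (s i : ℕ)) :=
    ⟨(hmem 0).2.1, fun i => (hmem (i + 1)).2.2 i (Nat.lt_succ_self i)⟩
  exact mem_iUnion₂.mpr ⟨z, (hmem 0).1, mem_of_parse hpar⟩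

lemma pi2_of_iInter_open {α : Type*} [TopologicalSpace α] {s : Set α}
    (h : ∃ f : ℕ → Set α, (∀ n, IsOpen (f n)) ∧ s = ⋂ n, f n) : PiClass 2 s := by
  obtain ⟨f, h1, h2⟩ := h
  exact ⟨f, h1, h2⟩

lemma dinf_gdelta [TopologicalSpace (Option Bool)] [DiscreteTopology (Option Bool)] :
    ∃ f : ℕ → Set (ℕ → Option Bool), (∀ n, IsOpen (f n)) ∧ Dinf = ⋂ n, f n := by
  refine ⟨fun N => ⋃ m, {y : ℕ → Option Bool | N ≤ m ∧ y m = none}, fun N => ?_, ?_⟩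
  · refine isOpen_iUnion fun m => ?_
    by_cases h : N ≤ m
    · have : {y : ℕ → Option Bool | N ≤ m ∧ y m = none}
          = (fun y : ℕ → Option Bool => y m) ⁻¹' {none} := by
        ext y; simp [h]
      rw [this]
      exact (isOpen_discrete _).preimage (continuous_apply m)
    · have : {y : ℕ → Option Bool | N ≤ m ∧ y m = none} = ∅ := by
        ext y; simp [h]
      rw [this]
      exact isOpen_empty
  · ext y
    simp only [Dinf, mem_setOf_eq, mem_iInter, mem_iUnion]


/-- for every closed `F ⊆ {0,1}^ω`, the image `g(F)` is the intersection of a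
closed set with the Π⁰₂ set `({0,1}*·d)^ω`, hence `g(F)` is Π⁰₂. -/
theorem gsub_image_closed_is_Pi02
    [TopologicalSpace (Option Bool)] [DiscreteTopology (Option Bool)]
    (F : Set (ℕ → Bool)) (hF : IsClosed F) :
    PiClass 2 Dinf ∧
    (∃ C : Set (ℕ → Option Bool), IsClosed C ∧ subOmegaImage gsub F = C ∩ Dinf) ∧
    PiClass 2 (subOmegaImage gsub F) := by
  have hCeq : subOmegaImage gsub F = closure (subOmegaImage gsub F) ∩ Dinf := by
    apply Subset.antisymm
    · exact subset_inter subset_closure G_subset_Dinf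
    · rintro x ⟨hx1, hx2⟩
      exact hard_dir hF hx1 hx2
  refine ⟨pi2_of_iInter_open dinf_gdelta,
    ⟨closure (subOmegaImage gsub F), isClosed_closure, hCeq⟩, ?_⟩
  obtain ⟨f, hf1, hf2⟩ := closed_gdelta (isClosed_closure
    (s := subOmegaImage gsub F))
  obtain ⟨g, hg1, hg2⟩ := dinf_gdelta
  refine pi2_of_iInter_open ⟨fun n => f n ∩ g n, fun n => (hf1 n).inter (hg1 n), ?_⟩
  rw [hCeq, hf2, hg2]
  ext y
  simp only [mem_inter_iff, mem_iInter]
  exact ⟨fun h i => ⟨h.1 i, h.2 i⟩, fun h => ⟨fun i => (h i).1, fun i => (h i).2⟩⟩
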